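/- Let C be an abelian category. Let 0 → M → E → N → 0 be a short exact sequence in C and suppose M decomposes as a finite direct sum M = M_0 ⊕ M_1 ⊕ ⋯ ⊕ M_n. For each i ∈ {0, …, n}, let 0 → M_i → E_i → N → 0 be the short exact sequence obtained by pushing out the given sequence along the projection M → M_i. Then there is a short exact sequence 0 → E → (⊕_{i=0}^n E_i) ⊕ N → ⊕_{i=0}^n N → 0. -/

import Mathlib

open CategoryTheory Limits

attribute [local instance] CategoryTheory.Abelian.hasFiniteBiproducts

universe v u

/-- Decomposition of a composition with `biprod.desc`. -/
lemma comp_biprod_desc_aux {C : Type u} [Category.{v} C] [Preadditive C]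
    {T X Y Z : C} [HasBinaryBiproduct X Y] (y : T ⟶ X ⊞ Y) (a : X ⟶ Z) (b : Y ⟶ Z) :
    y ≫ biprod.desc a b = y ≫ biprod.fst ≫ a + y ≫ biprod.snd ≫ b := by
  have h := biprod.total (X := X) (Y := Y)
  calc y ≫ biprod.desc a b
      = y ≫ (biprod.fst ≫ biprod.inl + biprod.snd ≫ biprod.inr) ≫ biprod.desc a b := by
        rw [h, Category.id_comp]
    _ = y ≫ biprod.fst ≫ a + y ≫ biprod.snd ≫ b := by
        simp only [Preadditive.add_comp, Preadditive.comp_add, Category.assoc,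
          biprod.inl_desc, biprod.inr_desc]

/-- Let `0 → M → E → N → 0` be a short exact sequence in an abelian
category with `M = M₀ ⊕ ⋯ ⊕ Mₙ`, and for each `i` let `0 → Mᵢ → Eᵢ → N → 0` be the short
exact sequence obtained by pushing out along the projection `M → Mᵢ` (so that
`Eᵢ = pushout (πᵢ) f`). Then there is a short exact sequence
`0 → E → (⊕ᵢ Eᵢ) ⊕ N → ⊕ᵢ N → 0`. -/
theorem pushout_summing_shortExact
    (C : Type u) [Category.{v} C] [Abelian C]
    (n : ℕ) (M : Fin (n + 1) → C) (E N : C)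
    (f : (⨁ M) ⟶ E) (g : E ⟶ N) (w : f ≫ g = 0)
    (hS : (ShortComplex.mk f g w).ShortExact) :
    ∃ (a : E ⟶ (⨁ fun i => pushout (biproduct.π M i) f) ⊞ N)
      (b : ((⨁ fun i => pushout (biproduct.π M i) f) ⊞ N) ⟶ ⨁ fun _ : Fin (n + 1) => N)
      (w' : a ≫ b = 0), (ShortComplex.mk a b w').ShortExact := by
  haveI : Mono f := hS.mono_f
  haveI : Epi g := hS.epi_g
  have hSexact : ∀ {T : C} (x : T ⟶ E), x ≫ g = 0 →
      ∃ (T' : C) (π : T' ⟶ T) (_ : Epi π) (mm : T' ⟶ ⨁ M), π ≫ x = mm ≫ f :=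
    fun x hx => hS.exact.exact_up_to_refinements x hx
  -- notation
  let P : Fin (n + 1) → C := fun i => pushout (biproduct.π M i) f
  let ι : ∀ i, M i ⟶ P i := fun i => pushout.inl (biproduct.π M i) f
  let ρ : ∀ i, E ⟶ P i := fun i => pushout.inr (biproduct.π M i) f
  let gP : ∀ i, P i ⟶ N := fun i =>
    pushout.desc 0 g (by simp [w])
  have hιg : ∀ i, ι i ≫ gP i = 0 := fun i => by exact pushout.inl_desc _ _ _
  have hρg : ∀ i, ρ i ≫ gP i = g := fun i => by exact pushout.inr_desc _ _ _
  have hcond : ∀ i, biproduct.π M i ≫ ι i = f ≫ ρ i := fun i => pushout.condition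
  -- each pushout sequence is exact at the middle
  have exact_i : ∀ i, (ShortComplex.mk (ι i) (gP i) (hιg i)).Exact := by
    intro i
    rw [ShortComplex.exact_iff_exact_up_to_refinements]
    intro T x hx
    dsimp at x hx ⊢
    have hc : Epi (biprod.desc (ι i) (ρ i)) := by
      constructor
      intro T' h k hk
      apply pushout.hom_ext
      · simpa using biprod.inl ≫= hk
      · simpa using biprod.inr ≫= hk
    obtain ⟨T', π₀, hπ₀, y, hy⟩ :=
      surjective_up_to_refinements_of_epi (biprod.desc (ι i) (ρ i)) x
    have hydec : y ≫ biprod.desc (ι i) (ρ i)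
        = y ≫ biprod.fst ≫ ι i + y ≫ biprod.snd ≫ ρ i :=
      comp_biprod_desc_aux y (ι i) (ρ i)
    have hy2 : (y ≫ biprod.snd) ≫ g = 0 := by
      have h1 : (π₀ ≫ x) ≫ gP i = 0 := by rw [Category.assoc, hx, comp_zero]
      rw [hy, hydec] at h1
      calc (y ≫ biprod.snd) ≫ g
          = (y ≫ biprod.fst ≫ ι i) ≫ gP i + (y ≫ biprod.snd ≫ ρ i) ≫ gP i := by
            simp only [Category.assoc, hιg i, hρg i, comp_zero, zero_add]
        _ = 0 := by rw [← Preadditive.add_comp, h1]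
    obtain ⟨T'', π₁, hπ₁, m, hm⟩ := hSexact (y ≫ biprod.snd) hy2
    have hm' : π₁ ≫ y ≫ biprod.snd = m ≫ f := by simpa using hm
    refine ⟨T'', π₁ ≫ π₀, epi_comp _ _, π₁ ≫ y ≫ biprod.fst + m ≫ biproduct.π M i, ?_⟩
    calc (π₁ ≫ π₀) ≫ x
        = π₁ ≫ y ≫ biprod.desc (ι i) (ρ i) := by rw [Category.assoc, hy]
      _ = π₁ ≫ (y ≫ biprod.fst ≫ ι i) + π₁ ≫ (y ≫ biprod.snd ≫ ρ i) := by
          rw [hydec, Preadditive.comp_add]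
      _ = (π₁ ≫ y ≫ biprod.fst) ≫ ι i + (m ≫ biproduct.π M i) ≫ ι i := by
          have key : π₁ ≫ (y ≫ biprod.snd ≫ ρ i) = (m ≫ biproduct.π M i) ≫ ι i := by
            calc π₁ ≫ (y ≫ biprod.snd ≫ ρ i)
                = (π₁ ≫ y ≫ biprod.snd) ≫ ρ i := by simp only [Category.assoc]
              _ = (m ≫ f) ≫ ρ i := by rw [hm']
              _ = m ≫ biproduct.π M i ≫ ι i := by rw [Category.assoc, ← hcond i]
              _ = (m ≫ biproduct.π M i) ≫ ι i := by rw [Category.assoc]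
          rw [key]
          simp only [Category.assoc]
      _ = (π₁ ≫ y ≫ biprod.fst + m ≫ biproduct.π M i) ≫ ι i := by
          rw [Preadditive.add_comp]
  -- the biproduct complex ⊕Mᵢ → ⊕Pᵢ → ⊕N is exact
  haveI : ∀ i, Mono (ι i) := fun i => by
    dsimp only [ι]; infer_instance
  have hιker : ∀ i, IsLimit (KernelFork.ofι (ι i) (hιg i)) :=
    fun i => (exact_i i).fIsKernel
  have hSbigref : ∀ {T : C} (y : T ⟶ ⨁ P), y ≫ biproduct.map gP = 0 →
      ∃ m : T ⟶ ⨁ M, m ≫ biproduct.map ι = y := by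
    intro T y hy
    have hcomp : ∀ i, (y ≫ biproduct.π P i) ≫ gP i = 0 := fun i => by
      have h3 := hy =≫ biproduct.π _ i
      rw [zero_comp, Category.assoc, biproduct.map_π, ← Category.assoc] at h3
      exact h3
    refine ⟨biproduct.lift fun i =>
      (KernelFork.IsLimit.lift' (hιker i) (y ≫ biproduct.π P i) (hcomp i)).1, ?_⟩
    apply biproduct.hom_ext
    intro i
    rw [Category.assoc, biproduct.map_π, ← Category.assoc, biproduct.lift_π]
    exact (KernelFork.IsLimit.lift' (hιker i) (y ≫ biproduct.π P i) (hcomp i)).2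
  -- the maps
  let u : E ⟶ ⨁ P := biproduct.lift ρ
  let q : (⨁ P) ⟶ ⨁ (fun _ : Fin (n + 1) => N) := biproduct.map gP
  let Δ : N ⟶ ⨁ (fun _ : Fin (n + 1) => N) := biproduct.lift fun _ => 𝟙 N
  have huq : u ≫ q = g ≫ Δ := by
    ext j
    simp [u, q, Δ, hρg]
  have hfu : f ≫ u = biproduct.map ι := by
    apply biproduct.hom_ext
    intro j
    simp only [Category.assoc, biproduct.lift_π, biproduct.map_π, u]
    exact (hcond j).symm
  have wab : biprod.lift u g ≫ biprod.desc q (-Δ) = 0 := by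
    rw [biprod.lift_desc, huq]; simp
  refine ⟨biprod.lift u g, biprod.desc q (-Δ), wab, ?_⟩
  -- epi of each gP i
  haveI : ∀ i, Epi (gP i) := fun i => epi_of_epi_fac (hρg i)
  haveI : Epi q := by dsimp only [q]; infer_instance
  have hepi : Epi (biprod.desc q (-Δ)) :=
    epi_of_epi_fac (biprod.inl_desc q (-Δ))
  -- mono of biprod.lift u g
  have hmonou : Mono u := by
    rw [Preadditive.mono_iff_cancel_zero]
    intro T h hh
    have hρ0 : ∀ i, h ≫ ρ i = 0 := fun i => by
      have := hh =≫ biproduct.π P i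
      simpa [u] using this
    have hg0 : h ≫ g = 0 := by
      calc h ≫ g = (h ≫ ρ 0) ≫ gP 0 := by rw [Category.assoc, hρg 0]
        _ = 0 := by rw [hρ0 0, zero_comp]
    obtain ⟨T', π₀, hπ₀, m, hm⟩ := hSexact h hg0
    have hm0 : m = 0 := by
      apply biproduct.hom_ext
      intro i
      rw [zero_comp, ← cancel_mono (ι i), zero_comp, Category.assoc, hcond i,
        ← Category.assoc, ← hm, Category.assoc, hρ0 i, comp_zero]
    rw [hm0, zero_comp] at hm
    exact zero_of_epi_comp π₀ hm
  have hmonoa : Mono (biprod.lift u g) :=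
    mono_of_mono_fac (biprod.lift_fst u g)
  -- exactness at the middle
  have hexact : (ShortComplex.mk (biprod.lift u g) (biprod.desc q (-Δ)) wab).Exact := by
    rw [ShortComplex.exact_iff_exact_up_to_refinements]
    intro T x hx
    dsimp at x hx ⊢
    obtain ⟨T₀, π₀, hπ₀, e₀, h₀⟩ :=
      surjective_up_to_refinements_of_epi g (x ≫ biprod.snd)
    have h₀' : (π₀ ≫ x) ≫ biprod.snd = e₀ ≫ g := by rw [Category.assoc]; exact h₀
    have hxq : x ≫ biprod.fst ≫ q = x ≫ biprod.snd ≫ Δ := by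
      have hxdec := comp_biprod_desc_aux x q (-Δ)
      rw [hx] at hxdec
      have hneg : x ≫ biprod.snd ≫ (-Δ) = -(x ≫ biprod.snd ≫ Δ) := by simp
      have h2 : x ≫ biprod.fst ≫ q - x ≫ biprod.snd ≫ Δ = 0 := by
        rw [sub_eq_add_neg, ← hneg, ← hxdec]
      exact sub_eq_zero.mp h2
    have hyq : (π₀ ≫ x ≫ biprod.fst - e₀ ≫ u) ≫ q = 0 := by
      rw [Preadditive.sub_comp]
      simp only [Category.assoc]
      rw [hxq, huq]
      simp only [← Category.assoc]
      rw [h₀', sub_self]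
    obtain ⟨m, hm⟩ := hSbigref _ hyq
    refine ⟨T₀, π₀, hπ₀, e₀ + m ≫ f, ?_⟩
    apply biprod.hom_ext
    · calc (π₀ ≫ x) ≫ biprod.fst
          = (π₀ ≫ x ≫ biprod.fst - e₀ ≫ u) + e₀ ≫ u := by
            rw [Category.assoc]; abel
        _ = m ≫ biproduct.map ι + e₀ ≫ u := by rw [hm]
        _ = (e₀ + m ≫ f) ≫ u := by
            rw [← hfu, Preadditive.add_comp, Category.assoc]
            exact add_comm _ _
        _ = ((e₀ + m ≫ f) ≫ biprod.lift u g) ≫ biprod.fst := by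
            rw [Category.assoc, biprod.lift_fst]
    · calc (π₀ ≫ x) ≫ biprod.snd
          = e₀ ≫ g := h₀'
        _ = (e₀ + m ≫ f) ≫ g := by
            rw [Preadditive.add_comp, Category.assoc, w, comp_zero, add_zero]
        _ = ((e₀ + m ≫ f) ≫ biprod.lift u g) ≫ biprod.snd := by
            rw [Category.assoc, biprod.lift_snd]
  exact ShortComplex.ShortExact.mk' hexact hmonoa hepi
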